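/- Let G be a simple graph on a finite vertex type V and suppose G is preconnected. Let v ∈ V. Then the simple graph G_v on the subtype V \ {v}, in which distinct vertices u and x are adjacent if and only if (G.Adj u x) or (G.Adj u v and G.Adj x v), is preconnected. -/

import Mathlib

/-- The star-clique operation at `v`: delete `v` and all edges at `v`, and join every pair of
distinct former neighbors of `v` by an edge (keeping all edges of `G` not incident to `v`). -/
def starClique {V : Type*} (G : SimpleGraph V) (v : V) :
    SimpleGraph {u : V // u ≠ v} where
  Adj u x := u ≠ x ∧ (G.Adj ↑u ↑x ∨ (G.Adj ↑u v ∧ G.Adj ↑x v))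
  symm := by
    constructor
    rintro u x ⟨h1, h2⟩
    refine ⟨h1.symm, ?_⟩
    rcases h2 with h | ⟨ha, hb⟩
    · exact Or.inl h.symm
    · exact Or.inr ⟨hb, ha⟩
  loopless := ⟨fun u h => h.1 rfl⟩

lemma starClique_aux {V : Type*} (G : SimpleGraph V) (v : V) :
    ∀ n (a b : V) (p : G.Walk a b), p.length ≤ n → ∀ (ha : a ≠ v) (hb : b ≠ v),
      (starClique G v).Reachable ⟨a, ha⟩ ⟨b, hb⟩ := by
  intro n
  induction n with
  | zero =>
    intro a b p hp ha hb
    cases p with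
    | nil => exact SimpleGraph.Reachable.refl _
    | cons h q => simp at hp
  | succ n ih =>
    intro a b p hp ha hb
    cases p with
    | nil => exact SimpleGraph.Reachable.refl _
    | @cons _ c _ h q =>
      by_cases hc : c = v
      · cases q with
        | nil => exact absurd hc hb
        | @cons _ d _ h' q' =>
          have hd : d ≠ v := fun hdv => G.loopless.irrefl v (hdv ▸ (hc ▸ h' : G.Adj v d))
          have hrest : (starClique G v).Reachable ⟨d, hd⟩ ⟨b, hb⟩ := by
            apply ih d b q'
            simp at hp; omega
          refine SimpleGraph.Reachable.trans ?_ hrest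
          by_cases had : a = d
          · subst had; exact SimpleGraph.Reachable.refl _
          · exact SimpleGraph.Adj.reachable ⟨by simp [had], Or.inr ⟨hc ▸ h, (hc ▸ h' : G.Adj v d).symm⟩⟩
      · have hrest : (starClique G v).Reachable ⟨c, hc⟩ ⟨b, hb⟩ := by
          apply ih c b q
          simp at hp; omega
        refine SimpleGraph.Reachable.trans ?_ hrest
        exact SimpleGraph.Adj.reachable ⟨by simp [h.ne], Or.inl h⟩

/-- If `G` is a preconnected simple graph on a finite vertex type `V` and `v ∈ V`, then the
graph obtained from `G` by the star-clique operation at `v` is preconnected. -/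
theorem starClique_preconnected {V : Type*} [Fintype V] (G : SimpleGraph V)
    (hG : G.Preconnected) (v : V) : (starClique G v).Preconnected := by
  intro u x
  obtain ⟨p⟩ := hG u x
  exact starClique_aux G v p.length u x p le_rfl u.2 x.2
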